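/- Let ℓ ≥ 4 be an integer, let a, b ∈ Sym(ℓ) be ℓ-cycles and let c, d ∈ Sym(ℓ) be transpositions with disjoint supports, such that a·b·c·d = 1 in Sym(ℓ). Then there exists v ∈ Sym(ℓ) with v² = c·d, v·b·v⁻¹ = a, and v·a·v⁻¹ = (c·d)·b·(c·d). -/

import Mathlib

set_option maxHeartbeats 1000000

/-- Reverse each of the four arcs `(0,k]`, `(k,j]`, `(j,m]`, `(m,0]` of the cycle
`0,1,…,ℓ-1`. -/
def arcRev (ℓ k j m v : ℕ) : ℕ :=
  if v = 0 then (if m + 1 = ℓ then 0 else m + 1)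
  else if v ≤ k then k + 1 - v
  else if v ≤ j then k + j + 1 - v
  else if v ≤ m then j + m + 1 - v
  else if v = m + 1 then 0 else m + 1 + ℓ - v

/-- The value function of `swap 0 j * swap k m`. -/
def swaps2 (j k m v : ℕ) : ℕ :=
  if v = 0 then j else if v = j then 0 else if v = k then m else if v = m then k else v

/-- Invariant set for the non-interleaved case `0 < j < k < m`. -/
def badP1 (j k m v : ℕ) : Prop := v = 0 ∨ (j + 1 ≤ v ∧ v ≤ k) ∨ m + 1 ≤ v

/-- Invariant set for the non-interleaved case `0 < k < m < j`. -/
def badP2 (j k m v : ℕ) : Prop := (1 ≤ v ∧ v ≤ k) ∨ (m + 1 ≤ v ∧ v ≤ j)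

section
variable {ℓ k j m : ℕ} (hk : 0 < k) (hkj : k < j) (hjm : j < m) (hml : m < ℓ)
include hk hkj hjm hml

theorem arcRev_eval0 (hv : (0:ℕ) < ℓ) :
    arcRev ℓ k j m 0 = if m + 1 = ℓ then 0 else m + 1 := by
  unfold arcRev; split_ifs <;> omega

theorem arcRev_eval1 {v : ℕ} (h1 : 1 ≤ v) (h2 : v ≤ k) : arcRev ℓ k j m v = k + 1 - v := by
  unfold arcRev; split_ifs <;> omega

theorem arcRev_eval2 {v : ℕ} (h1 : k < v) (h2 : v ≤ j) : arcRev ℓ k j m v = k + j + 1 - v := by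
  unfold arcRev; split_ifs <;> omega

theorem arcRev_eval3 {v : ℕ} (h1 : j < v) (h2 : v ≤ m) : arcRev ℓ k j m v = j + m + 1 - v := by
  unfold arcRev; split_ifs <;> omega

theorem arcRev_eval4 {v : ℕ} (h1 : m < v) (h2 : v < ℓ) :
    arcRev ℓ k j m v = if v = m + 1 then 0 else m + 1 + ℓ - v := by
  unfold arcRev; split_ifs <;> omega

theorem arcRev_lt {v : ℕ} (hv : v < ℓ) : arcRev ℓ k j m v < ℓ := by
  unfold arcRev; split_ifs <;> omega

theorem arcRev_invol {v : ℕ} (hv : v < ℓ) : arcRev ℓ k j m (arcRev ℓ k j m v) = v := by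
  rcases Nat.eq_zero_or_pos v with rfl | h1
  · rw [arcRev_eval0 hk hkj hjm hml hv]
    split_ifs with h
    · rw [arcRev_eval0 hk hkj hjm hml hv]; simp [h]
    · rw [arcRev_eval4 hk hkj hjm hml (by omega) (by omega)]; split_ifs <;> omega
  rcases le_or_gt v k with h2 | h2
  · rw [arcRev_eval1 hk hkj hjm hml h1 h2,
      arcRev_eval1 hk hkj hjm hml (by omega) (by omega)]; omega
  rcases le_or_gt v j with h3 | h3
  · rw [arcRev_eval2 hk hkj hjm hml h2 h3,
      arcRev_eval2 hk hkj hjm hml (by omega) (by omega)]; omega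
  rcases le_or_gt v m with h4 | h4
  · rw [arcRev_eval3 hk hkj hjm hml h3 h4,
      arcRev_eval3 hk hkj hjm hml (by omega) (by omega)]; omega
  · rw [arcRev_eval4 hk hkj hjm hml h4 hv]
    split_ifs with h
    · rw [arcRev_eval0 hk hkj hjm hml (by omega)]; split_ifs <;> omega
    · rw [arcRev_eval4 hk hkj hjm hml (by omega) (by omega)]; split_ifs <;> omega

theorem arcRev_key {v : ℕ} (hv : v < ℓ) :
    arcRev ℓ k j m (if arcRev ℓ k j m v + 1 = ℓ then 0 else arcRev ℓ k j m v + 1)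
      = swaps2 j k m (if v = 0 then ℓ - 1 else v - 1) := by
  rcases Nat.eq_zero_or_pos v with rfl | h1
  · conv_rhs => rw [if_pos (rfl : (0:ℕ) = 0)]
    rw [arcRev_eval0 hk hkj hjm hml hv]
    rcases eq_or_ne (m + 1) ℓ with hm | hm
    · rw [if_pos hm, if_neg (by omega), arcRev_eval1 hk hkj hjm hml (by omega) (by omega)]
      unfold swaps2; split_ifs <;> omega
    · rw [if_neg hm]
      rcases eq_or_ne (m + 2) ℓ with hm2 | hm2
      · rw [if_pos hm2, arcRev_eval0 hk hkj hjm hml (by omega), if_neg hm]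
        unfold swaps2; split_ifs <;> omega
      · rw [if_neg hm2, arcRev_eval4 hk hkj hjm hml (by omega) (by omega),
          if_neg (by omega)]
        unfold swaps2; split_ifs <;> omega
  conv_rhs => rw [if_neg (show ¬ v = 0 by omega)]
  rcases le_or_gt v k with h2 | h2
  · rw [arcRev_eval1 hk hkj hjm hml h1 h2]
    rcases eq_or_ne v 1 with rfl | hone
    · rw [if_neg (by omega), arcRev_eval2 hk hkj hjm hml (by omega) (by omega)]
      unfold swaps2; split_ifs <;> omega
    · rw [if_neg (by omega), arcRev_eval1 hk hkj hjm hml (by omega) (by omega)]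
      unfold swaps2; split_ifs <;> omega
  rcases le_or_gt v j with h3 | h3
  · rw [arcRev_eval2 hk hkj hjm hml h2 h3]
    rcases eq_or_ne v (k + 1) with rfl | hone
    · rw [if_neg (by omega), arcRev_eval3 hk hkj hjm hml (by omega) (by omega)]
      unfold swaps2; split_ifs <;> omega
    · rw [if_neg (by omega), arcRev_eval2 hk hkj hjm hml (by omega) (by omega)]
      unfold swaps2; split_ifs <;> omega
  rcases le_or_gt v m with h4 | h4
  · rw [arcRev_eval3 hk hkj hjm hml h3 h4]
    rcases eq_or_ne v (j + 1) with rfl | hone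
    · rcases eq_or_ne (m + 1) ℓ with hm | hm
      · rw [if_pos (by omega), arcRev_eval0 hk hkj hjm hml (by omega), if_pos hm]
        unfold swaps2; split_ifs <;> omega
      · rw [if_neg (by omega), arcRev_eval4 hk hkj hjm hml (by omega) (by omega),
          if_pos (by omega)]
        unfold swaps2; split_ifs <;> omega
    · rw [if_neg (by omega), arcRev_eval3 hk hkj hjm hml (by omega) (by omega)]
      unfold swaps2; split_ifs <;> omega
  · rw [arcRev_eval4 hk hkj hjm hml h4 hv]
    rcases eq_or_ne v (m + 1) with rfl | hone
    · rw [if_pos rfl, if_neg (by omega), arcRev_eval1 hk hkj hjm hml (by omega) (by omega)]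
      unfold swaps2; split_ifs <;> omega
    · rw [if_neg hone]
      rcases eq_or_ne v (m + 2) with rfl | htwo
      · rw [if_pos (by omega), arcRev_eval0 hk hkj hjm hml (by omega), if_neg (by omega)]
        unfold swaps2; split_ifs <;> omega
      · rw [if_neg (by omega), arcRev_eval4 hk hkj hjm hml (by omega) (by omega),
          if_neg (by omega)]
        unfold swaps2; split_ifs <;> omega

end

theorem bad1_iff {ℓ j k m v : ℕ} (hj : 0 < j) (hjk : j < k) (hkm : k < m) (hml : m < ℓ)
    (hv : v < ℓ) :
    badP1 j k m v ↔ badP1 j k m (swaps2 j k m (if v = 0 then ℓ - 1 else v - 1)) := by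
  rcases eq_or_ne v 0 with rfl | h0
  · rw [if_pos rfl]; unfold badP1 swaps2; split_ifs <;> omega
  · rw [if_neg h0]; unfold badP1 swaps2; split_ifs <;> omega

theorem bad2_iff {ℓ j k m v : ℕ} (hk : 0 < k) (hkm : k < m) (hmj : m < j) (hjl : j < ℓ)
    (hv : v < ℓ) :
    badP2 j k m v ↔ badP2 j k m (swaps2 j k m (if v = 0 then ℓ - 1 else v - 1)) := by
  rcases eq_or_ne v 0 with rfl | h0
  · rw [if_pos rfl]; unfold badP2 swaps2; split_ifs <;> omega
  · rw [if_neg h0]; unfold badP2 swaps2; split_ifs <;> omega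

theorem zpow_prop_invariant {α : Type*} (f : Equiv.Perm α) (S : α → Prop)
    (h : ∀ x, S x ↔ S (f x)) : ∀ (n : ℤ) (x : α), S x ↔ S ((f ^ n) x) := by
  have h' : ∀ x, S x ↔ S (f⁻¹ x) := fun x => by
    conv_lhs => rw [← Equiv.apply_symm_apply f x]
    exact (h (f⁻¹ x)).symm
  intro n
  induction n using Int.induction_on with
  | zero => intro x; simp
  | succ i ih =>
      intro x
      rw [zpow_add_one, Equiv.Perm.mul_apply]
      exact (h x).trans (ih (f x))
  | pred i ih =>
      intro x
      rw [zpow_sub_one, Equiv.Perm.mul_apply]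
      exact (h' x).trans (ih (f⁻¹ x))

theorem key_lemma (ℓ : ℕ) [NeZero ℓ] (hℓ4 : 4 ≤ ℓ) (b₀ : Equiv.Perm (Fin ℓ))
    (hb₀ : ∀ x : Fin ℓ, (b₀ x).val = (x.val + 1) % ℓ)
    (J K M : Fin ℓ) (hJ0 : J ≠ 0) (hK0 : K ≠ 0) (hM0 : M ≠ 0)
    (hJK : J ≠ K) (hJM : J ≠ M) (hKM : K.val < M.val)
    (hA : (Equiv.swap 0 J * Equiv.swap K M * b₀⁻¹).IsCycle)
    (hA' : (Equiv.swap 0 J * Equiv.swap K M * b₀⁻¹).support = Finset.univ) :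
    ∃ t : Equiv.Perm (Fin ℓ), t * t = 1 ∧
      t * b₀ * t = Equiv.swap 0 J * Equiv.swap K M * b₀⁻¹ := by
  have hKM' : K ≠ M := fun h => absurd hKM (by rw [h]; exact lt_irrefl _)
  have hj0 : J.val ≠ 0 := Fin.val_ne_zero_iff.mpr hJ0
  have hk0 : K.val ≠ 0 := Fin.val_ne_zero_iff.mpr hK0
  have hm0 : M.val ≠ 0 := Fin.val_ne_zero_iff.mpr hM0
  have hjk : J.val ≠ K.val := by simpa [Fin.ext_iff] using hJK
  have hjm : J.val ≠ M.val := by simpa [Fin.ext_iff] using hJM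
  have binv : ∀ x : Fin ℓ, (b₀⁻¹ x).val = if x.val = 0 then ℓ - 1 else x.val - 1 := by
    intro x
    have hy : b₀ (b₀⁻¹ x) = x := Equiv.apply_symm_apply b₀ x
    have h1 : x.val = ((b₀⁻¹ x).val + 1) % ℓ := by rw [← hb₀ (b₀⁻¹ x), hy]
    have h2 : (b₀⁻¹ x).val < ℓ := (b₀⁻¹ x).isLt
    rcases eq_or_ne ((b₀⁻¹ x).val + 1) ℓ with he | he
    · rw [he, Nat.mod_self] at h1; rw [if_pos h1]; omega
    · rw [Nat.mod_eq_of_lt (by omega)] at h1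
      rw [if_neg (by omega)]; omega
  have LA : ∀ z : Fin ℓ, (Equiv.swap 0 J (Equiv.swap K M z)).val
      = swaps2 J.val K.val M.val z.val := by
    intro z
    unfold swaps2
    rcases eq_or_ne z 0 with rfl | h0
    · rw [Equiv.swap_apply_of_ne_of_ne (Ne.symm hK0) (Ne.symm hM0), Equiv.swap_apply_left,
        if_pos (Fin.val_zero ℓ)]
    · rw [if_neg (Fin.val_ne_zero_iff.mpr h0)]
      rcases eq_or_ne z J with rfl | hJ'
      · rw [Equiv.swap_apply_of_ne_of_ne hJK hJM, Equiv.swap_apply_right, if_pos rfl,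
          Fin.val_zero]
      · rw [if_neg (fun h => hJ' (Fin.ext h))]
        rcases eq_or_ne z K with rfl | hK'
        · rw [Equiv.swap_apply_left,
            Equiv.swap_apply_of_ne_of_ne hM0 (Ne.symm hJM), if_pos rfl]
        · rw [if_neg (fun h => hK' (Fin.ext h))]
          rcases eq_or_ne z M with rfl | hM'
          · rw [Equiv.swap_apply_right,
              Equiv.swap_apply_of_ne_of_ne hK0 (Ne.symm hJK), if_pos rfl]
          · rw [if_neg (fun h => hM' (Fin.ext h)),
              Equiv.swap_apply_of_ne_of_ne hK' hM', Equiv.swap_apply_of_ne_of_ne h0 hJ']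
  have hAval : ∀ x : Fin ℓ, ((Equiv.swap 0 J * Equiv.swap K M * b₀⁻¹) x).val
      = swaps2 J.val K.val M.val (if x.val = 0 then ℓ - 1 else x.val - 1) := by
    intro x; simp only [Equiv.Perm.mul_apply]; rw [LA, binv]
  have hmove : ∀ x : Fin ℓ, (Equiv.swap 0 J * Equiv.swap K M * b₀⁻¹) x ≠ x := fun x =>
    Equiv.Perm.mem_support.mp (by rw [hA']; exact Finset.mem_univ x)
  have h1ℓ : 1 < ℓ := by omega
  obtain ⟨x₀, hx₀, hall⟩ := hA
  have sc : (Equiv.swap 0 J * Equiv.swap K M * b₀⁻¹).SameCycle 0 ⟨1, h1ℓ⟩ :=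
    ((hall (hmove 0)).symm.trans (hall (hmove ⟨1, h1ℓ⟩)))
  obtain ⟨z, hz⟩ := sc
  rcases lt_trichotomy J.val K.val with hcase | hcase | hcase
  · -- bad case 1 : 0 < j < k < m
    exfalso
    have hstep : ∀ x : Fin ℓ, badP1 J.val K.val M.val x.val
        ↔ badP1 J.val K.val M.val (((Equiv.swap 0 J * Equiv.swap K M * b₀⁻¹) x).val) := by
      intro x
      rw [hAval x]
      exact bad1_iff (Nat.pos_of_ne_zero hj0) hcase hKM M.isLt x.isLt
    have hiff := zpow_prop_invariant _ (fun x : Fin ℓ => badP1 J.val K.val M.val x.val)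
      hstep z 0
    rw [hz] at hiff
    have hv1 : (⟨1, h1ℓ⟩ : Fin ℓ).val = 1 := rfl
    have h0' : badP1 J.val K.val M.val (0 : Fin ℓ).val := Or.inl (Fin.val_zero ℓ)
    have h1' := hiff.mp h0'
    unfold badP1 at h1'
    rw [hv1] at h1'
    rcases h1' with h | ⟨h, h'⟩ | h <;> omega
  · exact absurd hcase hjk
  · rcases lt_trichotomy J.val M.val with hcase2 | hcase2 | hcase2
    · -- good case : 0 < k < j < m
      have hk : 0 < K.val := Nat.pos_of_ne_zero hk0
      have hml : M.val < ℓ := M.isLt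
      let tf : Fin ℓ → Fin ℓ :=
        fun x => ⟨arcRev ℓ K.val J.val M.val x.val, arcRev_lt hk hcase hcase2 hml x.isLt⟩
      have tval : ∀ x : Fin ℓ, (tf x).val = arcRev ℓ K.val J.val M.val x.val := fun _ => rfl
      have tinv : Function.Involutive tf := fun x =>
        Fin.ext (by rw [tval, tval]; exact arcRev_invol hk hcase hcase2 hml x.isLt)
      refine ⟨tinv.toPerm, ?_, ?_⟩
      · ext x
        simp only [Equiv.Perm.mul_apply, Equiv.Perm.one_apply,
          Function.Involutive.coe_toPerm]
        exact congrArg Fin.val (tinv x)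
      · ext x
        simp only [Equiv.Perm.mul_apply, Function.Involutive.coe_toPerm]
        rw [tval, hb₀ (tf x), tval, LA, binv]
        have harc : arcRev ℓ K.val J.val M.val x.val < ℓ :=
          arcRev_lt hk hcase hcase2 hml x.isLt
        have hmod : (arcRev ℓ K.val J.val M.val x.val + 1) % ℓ
            = if arcRev ℓ K.val J.val M.val x.val + 1 = ℓ then 0
              else arcRev ℓ K.val J.val M.val x.val + 1 := by
          split_ifs with hh
          · rw [hh, Nat.mod_self]
          · exact Nat.mod_eq_of_lt (by omega)
        rw [hmod]
        exact arcRev_key hk hcase hcase2 hml x.isLt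
    · exact absurd hcase2 hjm
    · -- bad case 2 : 0 < k < m < j
      exfalso
      have hstep : ∀ x : Fin ℓ, badP2 J.val K.val M.val x.val
          ↔ badP2 J.val K.val M.val (((Equiv.swap 0 J * Equiv.swap K M * b₀⁻¹) x).val) := by
        intro x
        rw [hAval x]
        exact bad2_iff (Nat.pos_of_ne_zero hk0) hKM hcase2 J.isLt x.isLt
      have hiff := zpow_prop_invariant _ (fun x : Fin ℓ => badP2 J.val K.val M.val x.val)
        hstep z 0
      rw [hz] at hiff
      have hv1 : (⟨1, h1ℓ⟩ : Fin ℓ).val = 1 := rfl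
      have h1' : badP2 J.val K.val M.val (⟨1, h1ℓ⟩ : Fin ℓ).val := by
        unfold badP2; rw [hv1]; left; omega
      have h0' := hiff.mpr h1'
      unfold badP2 at h0'
      rw [Fin.val_zero] at h0'
      rcases h0' with ⟨h, h'⟩ | ⟨h, h'⟩ <;> omega

/-- **Lemma A.1(2)**: if `a, b` are `ℓ`-cycles, `c, d` are disjoint transpositions in
`Sym(ℓ)` and `a·b·c·d = 1`, then there exists `v` with `v² = c·d`, `v·b·v⁻¹ = a` and
`v·a·v⁻¹ = (c·d)·b·(c·d)`. -/
theorem statement10 (ℓ : ℕ) (hℓ : 4 ≤ ℓ) (a b c d : Equiv.Perm (Fin ℓ))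
    (ha : a.IsCycle) (ha' : a.support.card = ℓ)
    (hb : b.IsCycle) (hb' : b.support.card = ℓ)
    (hc : c.IsSwap) (hd : d.IsSwap) (hcd : c.Disjoint d)
    (h : a * b * c * d = 1) :
    ∃ v : Equiv.Perm (Fin ℓ),
      v ^ 2 = c * d ∧ v * b * v⁻¹ = a ∧ v * a * v⁻¹ = (c * d) * b * (c * d) := by
  haveI : NeZero ℓ := ⟨by omega⟩
  obtain ⟨p, q, hpq, rfl⟩ := hc
  obtain ⟨r, s, hrs, rfl⟩ := hd
  have hcomm : Equiv.swap p q * Equiv.swap r s = Equiv.swap r s * Equiv.swap p q :=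
    hcd.commute.eq
  have hcd2 : (Equiv.swap p q * Equiv.swap r s) * (Equiv.swap p q * Equiv.swap r s) = 1 := by
    rw [mul_assoc, ← mul_assoc (Equiv.swap r s), ← hcomm,
      mul_assoc (Equiv.swap p q) (Equiv.swap r s) (Equiv.swap r s), Equiv.swap_mul_self,
      mul_one, Equiv.swap_mul_self]
  have hcdinv : (Equiv.swap p q * Equiv.swap r s)⁻¹ = Equiv.swap p q * Equiv.swap r s :=
    inv_eq_of_mul_eq_one_right hcd2
  have hab : a * b = Equiv.swap p q * Equiv.swap r s := by
    have h1 : a * b * (Equiv.swap p q * Equiv.swap r s) = 1 := by rw [← mul_assoc]; exact h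
    calc a * b = (a * b) * ((Equiv.swap p q * Equiv.swap r s)
          * (Equiv.swap p q * Equiv.swap r s)) := by rw [hcd2, mul_one]
      _ = (a * b * (Equiv.swap p q * Equiv.swap r s))
          * (Equiv.swap p q * Equiv.swap r s) := by rw [← mul_assoc]
      _ = Equiv.swap p q * Equiv.swap r s := by rw [h1, one_mul]
  have ha2 : a = (Equiv.swap p q * Equiv.swap r s) * b⁻¹ := by rw [← hab]; group
  -- basic facts about b
  have hbsup : b.support = Finset.univ :=
    b.support.eq_univ_of_card (by rw [hb', Fintype.card_fin])
  have hbmove : ∀ x : Fin ℓ, b x ≠ x := fun x =>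
    Equiv.Perm.mem_support.mp (by rw [hbsup]; exact Finset.mem_univ x)
  have hbord : orderOf b = ℓ := by rw [hb.orderOf, hb']
  have hbpow : ∀ n : ℕ, b ^ (n % ℓ) = b ^ n := by
    intro n; have h0 := pow_mod_orderOf b n; rwa [hbord] at h0
  -- the enumeration of points along the cycle of b starting at p
  have key2 : ∀ v w : Fin ℓ, v.val ≤ w.val → (b ^ v.val) p = (b ^ w.val) p → v = w := by
    intro v w hle hvw
    have h1 : (b ^ (w.val - v.val)) p = p := by
      have h2 : (b ^ v.val) ((b ^ (w.val - v.val)) p) = (b ^ v.val) p := by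
        rw [← Equiv.Perm.mul_apply, ← pow_add, Nat.add_sub_cancel' hle]
        exact hvw.symm
      exact (Equiv.injective _) h2
    have h2 : b ^ (w.val - v.val) = 1 := (hb.pow_eq_one_iff' (hbmove p)).mpr h1
    have h3 : ℓ ∣ (w.val - v.val) := by
      have h0 := orderOf_dvd_of_pow_eq_one h2; rwa [hbord] at h0
    have h4 : w.val - v.val = 0 := Nat.eq_zero_of_dvd_of_lt h3 (by omega)
    exact Fin.ext (by omega)
  have einj : Function.Injective (fun v : Fin ℓ => (b ^ v.val) p) := by
    intro v w hvw
    simp only at hvw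
    rcases le_total v.val w.val with hle | hle
    · exact key2 v w hle hvw
    · exact (key2 w v hle hvw.symm).symm
  set E : Equiv.Perm (Fin ℓ) :=
    Equiv.ofBijective _ (Finite.injective_iff_bijective.mp einj) with hEdef
  have hEapp : ∀ v : Fin ℓ, E v = (b ^ v.val) p := fun v => rfl
  have hb₀ : ∀ x : Fin ℓ, ((E⁻¹ * b * E) x).val = (x.val + 1) % ℓ := by
    intro x
    have h2 : b (E x) = E ⟨(x.val + 1) % ℓ, Nat.mod_lt _ (by omega)⟩ := by
      rw [hEapp, hEapp]
      show b ((b ^ x.val) p) = (b ^ (((x.val + 1) % ℓ))) p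
      rw [hbpow (x.val + 1), pow_succ']
      rfl
    show (E⁻¹ (b (E x))).val = _
    rw [h2, ← Equiv.Perm.mul_apply, inv_mul_cancel, Equiv.Perm.one_apply]
  have hp0 : E⁻¹ p = 0 := by
    have h0 : E (0 : Fin ℓ) = p := by rw [hEapp]; simp
    rw [← h0, ← Equiv.Perm.mul_apply, inv_mul_cancel, Equiv.Perm.one_apply]
  -- distinctness of the four points
  have hps : ∀ x, (x = p ∨ x = q) → (x = r ∨ x = s) → False := by
    intro x hx1 hx2
    rcases hcd x with h1 | h2
    · rcases hx1 with rfl | rfl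
      · rw [Equiv.swap_apply_left] at h1; exact hpq h1.symm
      · rw [Equiv.swap_apply_right] at h1; exact hpq h1
    · rcases hx2 with rfl | rfl
      · rw [Equiv.swap_apply_left] at h2; exact hrs h2.symm
      · rw [Equiv.swap_apply_right] at h2; exact hrs h2
  have hEinj : Function.Injective (E⁻¹ : Equiv.Perm (Fin ℓ)) := Equiv.injective _
  have hJ0 : E⁻¹ q ≠ 0 := by
    rw [← hp0]; exact fun hh => hpq (hEinj hh).symm
  have hK0 : E⁻¹ r ≠ 0 := by
    rw [← hp0]; exact fun hh => hps r (Or.inl (hEinj hh)) (Or.inl rfl)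
  have hM0 : E⁻¹ s ≠ 0 := by
    rw [← hp0]; exact fun hh => hps s (Or.inl (hEinj hh)) (Or.inr rfl)
  have hJK : E⁻¹ q ≠ E⁻¹ r := fun hh => hps q (Or.inr rfl) (Or.inl (hEinj hh))
  have hJM : E⁻¹ q ≠ E⁻¹ s := fun hh => hps q (Or.inr rfl) (Or.inr (hEinj hh))
  have hKM : E⁻¹ r ≠ E⁻¹ s := fun hh => hrs (hEinj hh)
  -- conjugated swaps
  have hc1 : Equiv.swap (0 : Fin ℓ) (E⁻¹ q) = E⁻¹ * Equiv.swap p q * E := by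
    rw [← hp0, Equiv.swap_apply_apply, inv_inv]
  have hc2 : Equiv.swap (E⁻¹ r) (E⁻¹ s) = E⁻¹ * Equiv.swap r s * E := by
    rw [Equiv.swap_apply_apply, inv_inv]
  have expand : E⁻¹ * ((Equiv.swap p q * Equiv.swap r s) * b⁻¹) * E
      = (E⁻¹ * Equiv.swap p q * E) * (E⁻¹ * Equiv.swap r s * E) * (E⁻¹ * b * E)⁻¹ := by
    group
  have hA0 : E⁻¹ * a * E
      = Equiv.swap 0 (E⁻¹ q) * Equiv.swap (E⁻¹ r) (E⁻¹ s) * (E⁻¹ * b * E)⁻¹ := by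
    rw [ha2, expand, ← hc1, ← hc2]
  -- conjugated cycle facts
  have hA1 : (E⁻¹ * a * E).IsCycle := by
    have h1 := ha.conj (g := E⁻¹)
    rwa [inv_inv] at h1
  have hA2 : (E⁻¹ * a * E).support = Finset.univ := by
    apply Finset.eq_univ_of_card
    have h1 := Equiv.Perm.card_support_conj (σ := E⁻¹) (τ := a)
    rw [inv_inv] at h1
    rw [h1, ha', Fintype.card_fin]
  -- apply the key lemma (with the two transposition points suitably ordered)
  have main : ∃ t' : Equiv.Perm (Fin ℓ), t' * t' = 1 ∧
      t' * (E⁻¹ * b * E) * t' = E⁻¹ * a * E := by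
    rcases lt_trichotomy (E⁻¹ r).val (E⁻¹ s).val with ho | ho | ho
    · obtain ⟨t', h1, h2⟩ := key_lemma ℓ hℓ (E⁻¹ * b * E) hb₀ (E⁻¹ q) (E⁻¹ r) (E⁻¹ s)
        hJ0 hK0 hM0 hJK hJM ho (hA0 ▸ hA1) (hA0 ▸ hA2)
      exact ⟨t', h1, by rw [h2, ← hA0]⟩
    · exact absurd (Fin.ext ho) hKM
    · rw [Equiv.swap_comm (E⁻¹ r) (E⁻¹ s)] at hA0
      obtain ⟨t', h1, h2⟩ := key_lemma ℓ hℓ (E⁻¹ * b * E) hb₀ (E⁻¹ q) (E⁻¹ s) (E⁻¹ r)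
        hJ0 hM0 hK0 hJM hJK ho (hA0 ▸ hA1) (hA0 ▸ hA2)
      exact ⟨t', h1, by rw [h2, ← hA0]⟩
  obtain ⟨t', ht'1, ht'2⟩ := main
  -- pull back and assemble
  have htt : (E * t' * E⁻¹) * (E * t' * E⁻¹) = 1 := by
    calc (E * t' * E⁻¹) * (E * t' * E⁻¹) = E * (t' * t') * E⁻¹ := by group
      _ = 1 := by rw [ht'1]; group
  have htbt : (E * t' * E⁻¹) * b * (E * t' * E⁻¹) = a := by
    calc (E * t' * E⁻¹) * b * (E * t' * E⁻¹)
        = E * (t' * (E⁻¹ * b * E) * t') * E⁻¹ := by group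
      _ = E * (E⁻¹ * a * E) * E⁻¹ := by rw [ht'2]
      _ = a := by group
  have hXinv : (E * t' * E⁻¹)⁻¹ = E * t' * E⁻¹ := inv_eq_of_mul_eq_one_right htt
  have g1 : ((E * t' * E⁻¹) * b) ^ 2 = Equiv.swap p q * Equiv.swap r s := by
    calc ((E * t' * E⁻¹) * b) ^ 2
        = ((E * t' * E⁻¹) * b * (E * t' * E⁻¹)) * b := by rw [pow_two]; group
      _ = a * b := by rw [htbt]
      _ = Equiv.swap p q * Equiv.swap r s := hab
  have g2 : ((E * t' * E⁻¹) * b) * b * ((E * t' * E⁻¹) * b)⁻¹ = a := by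
    calc ((E * t' * E⁻¹) * b) * b * ((E * t' * E⁻¹) * b)⁻¹
        = (E * t' * E⁻¹) * b * (E * t' * E⁻¹)⁻¹ := by group
      _ = (E * t' * E⁻¹) * b * (E * t' * E⁻¹) := by rw [hXinv]
      _ = a := htbt
  have g1' : ((E * t' * E⁻¹) * b) * ((E * t' * E⁻¹) * b)
      = Equiv.swap p q * Equiv.swap r s := by rw [← pow_two]; exact g1
  have g3 : ((E * t' * E⁻¹) * b) * a * ((E * t' * E⁻¹) * b)⁻¹
      = (Equiv.swap p q * Equiv.swap r s) * b * (Equiv.swap p q * Equiv.swap r s) := by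
    calc ((E * t' * E⁻¹) * b) * a * ((E * t' * E⁻¹) * b)⁻¹
        = ((E * t' * E⁻¹) * b) * (((E * t' * E⁻¹) * b) * b * ((E * t' * E⁻¹) * b)⁻¹)
            * ((E * t' * E⁻¹) * b)⁻¹ := by rw [g2]
      _ = (((E * t' * E⁻¹) * b) * ((E * t' * E⁻¹) * b)) * b
            * (((E * t' * E⁻¹) * b) * ((E * t' * E⁻¹) * b))⁻¹ := by group
      _ = (Equiv.swap p q * Equiv.swap r s) * b
            * (Equiv.swap p q * Equiv.swap r s)⁻¹ := by rw [g1']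
      _ = (Equiv.swap p q * Equiv.swap r s) * b
            * (Equiv.swap p q * Equiv.swap r s) := by rw [hcdinv]
  exact ⟨(E * t' * E⁻¹) * b, g1, g2, g3⟩
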